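/- (Proposition 2) For the Toeplitz weight matrix W = T_P(diag(Γ^{-1/2})), the projection onto the subspace of Toeplitz matrices with respect to the W-weighted Frobenius norm ||W ⊙ (·)||_F coincides with the projection with respect to the canonical Frobenius norm: Π^W_{T_P}(X) = Π_{T_P}(X) = T_P Γ^{-1} T_P*(X) for every X ∈ C^{(N-P)×(P+1)}. -/

import Mathlib

open scoped BigOperators

/-- The Toeplitzification operator: `[T_P(x)]_{i,j} = x_{-M+P+i-j}` (0-based indexing). -/
noncomputable def Toep (M P : ℕ) (x : Fin (2*M+1) → ℂ) :
    Matrix (Fin (2*M+1-P)) (Fin (P+1)) ℂ :=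
  fun i j => x ⟨P + i.val - j.val, by have hi := i.isLt; have hj := j.isLt; omega⟩

/-- The adjoint of the Toeplitzification operator (diagonal summation). -/
noncomputable def ToepStar (M P : ℕ) (H : Matrix (Fin (2*M+1-P)) (Fin (P+1)) ℂ) :
    Fin (2*M+1) → ℂ :=
  fun m => ∑ i : Fin (2*M+1-P), ∑ j : Fin (P+1),
    if P + i.val = m.val + j.val then H i j else 0

/-- The pseudoinverse `T_P^† = Γ^{-1} T_P^*` (diagonal averaging). -/
noncomputable def ToepDag (M P : ℕ) (H : Matrix (Fin (2*M+1-P)) (Fin (P+1)) ℂ) :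
    Fin (2*M+1) → ℂ :=
  fun m => (((min (m.val + 1) (min (P+1) (2*M+1 - m.val)) : ℕ) : ℂ))⁻¹ * ToepStar M P H m

/-- The entries of the weight matrix `W = T_P(diag(Γ^{-1/2}))`. -/
noncomputable def wgt (M P : ℕ) (i : Fin (2*M+1-P)) (j : Fin (P+1)) : ℝ :=
  (Real.sqrt ((min (P + i.val - j.val + 1)
      (min (P+1) (2*M+1 - (P + i.val - j.val))) : ℕ)))⁻¹

def dIdx (M P : ℕ) (i : Fin (2*M+1-P)) (j : Fin (P+1)) : Fin (2*M+1) :=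
  ⟨P + i.val - j.val, by have := i.isLt; have := j.isLt; omega⟩

def nCnt (M P : ℕ) (m : Fin (2*M+1)) : ℕ :=
  min (m.val + 1) (min (P+1) (2*M+1 - m.val))

def Dg (M P : ℕ) (m : Fin (2*M+1)) : Finset (Fin (2*M+1-P) × Fin (P+1)) :=
  Finset.univ.filter (fun p => P + p.1.val = m.val + p.2.val)

lemma Dg_card (M P : ℕ) (hP : P ≤ M) (m : Fin (2*M+1)) :
    (Dg M P m).card = nCnt M P m := by
  have hm := m.isLt
  have h1 : (Dg M P m).card =
      ((Finset.range (P+1)).filter (fun j => P ≤ m.val + j ∧ m.val + j ≤ 2*M)).card := by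
    apply Finset.card_bij (fun p _ => p.2.val)
    · intro p hp
      simp only [Dg, Finset.mem_filter, Finset.mem_univ, true_and] at hp
      have h1 := p.1.isLt; have h2 := p.2.isLt
      simp only [Finset.mem_filter, Finset.mem_range]
      omega
    · intro p hp q hq h
      simp only [Dg, Finset.mem_filter, Finset.mem_univ, true_and] at hp hq
      have hj : p.2.val = q.2.val := h
      have hi : p.1.val = q.1.val := by omega
      exact Prod.ext (Fin.ext hi) (Fin.ext hj)
    · intro j hj
      simp only [Finset.mem_filter, Finset.mem_range] at hj
      refine ⟨(⟨m.val + j - P, by omega⟩, ⟨j, by omega⟩), ?_, rfl⟩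
      simp only [Dg, Finset.mem_filter, Finset.mem_univ, true_and]
      omega
  have h2 : (Finset.range (P+1)).filter (fun j => P ≤ m.val + j ∧ m.val + j ≤ 2*M)
      = Finset.Ico (P - m.val) (min (P+1) (2*M+1 - m.val)) := by
    ext j
    simp only [Finset.mem_filter, Finset.mem_range, Finset.mem_Ico]
    omega
  rw [h1, h2, Nat.card_Ico]
  simp only [nCnt]
  omega

lemma ToepStar_eq (M P : ℕ) (X : Matrix (Fin (2*M+1-P)) (Fin (P+1)) ℂ) (m : Fin (2*M+1)) :
    ToepStar M P X m = ∑ p ∈ Dg M P m, X p.1 p.2 := by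
  rw [Dg, Finset.sum_filter, Fintype.sum_prod_type]
  rfl

lemma nCnt_pos (M P : ℕ) (m : Fin (2*M+1)) : 0 < nCnt M P m := by
  have := m.isLt
  simp only [nCnt]
  omega

lemma Dg_sum_zero (M P : ℕ) (hP : P ≤ M) (X : Matrix (Fin (2*M+1-P)) (Fin (P+1)) ℂ)
    (m : Fin (2*M+1)) :
    ∑ p ∈ Dg M P m, (X p.1 p.2 - ToepDag M P X m) = 0 := by
  have hn : ((nCnt M P m : ℕ) : ℂ) ≠ 0 := by
    exact_mod_cast Nat.cast_ne_zero.mpr (nCnt_pos M P m).ne'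
  rw [Finset.sum_sub_distrib, Finset.sum_const, Dg_card M P hP m, nsmul_eq_mul]
  have : ToepDag M P X m = ((nCnt M P m : ℕ) : ℂ)⁻¹ * ∑ p ∈ Dg M P m, X p.1 p.2 := by
    rw [ToepDag, ToepStar_eq]; rfl
  rw [this, mul_inv_cancel_left₀ hn, sub_self]

lemma mean_min {α : Type*} (s : Finset α) (f : α → ℂ) (c u : ℂ)
    (h : ∑ x ∈ s, (f x - c) = 0) :
    ∑ x ∈ s, ‖f x - c‖^2 ≤ ∑ x ∈ s, ‖f x - u‖^2 := by
  have hpt : ∀ x, ‖f x - u‖^2 = ‖f x - c‖^2 + ‖c - u‖^2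
      + 2 * ((f x - c) * (starRingEnd ℂ) (c - u)).re := by
    intro x
    have e : f x - u = (f x - c) + (c - u) := by ring
    rw [e]
    simp only [Complex.sq_norm]
    exact Complex.normSq_add _ _
  have hcross : ∑ x ∈ s, ((f x - c) * (starRingEnd ℂ) (c - u)).re = 0 := by
    rw [← Complex.re_sum, ← Finset.sum_mul, h, zero_mul, Complex.zero_re]
  calc ∑ x ∈ s, ‖f x - c‖^2
      ≤ ∑ x ∈ s, ‖f x - c‖^2 + s.card * ‖c - u‖^2 := le_add_of_nonneg_right (by positivity)
    _ = ∑ x ∈ s, ‖f x - u‖^2 := by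
        simp only [hpt, Finset.sum_add_distrib, Finset.sum_const, nsmul_eq_mul,
          ← Finset.mul_sum, hcross, mul_zero, add_zero]

lemma sum_diag (M P : ℕ) (g : Fin (2*M+1-P) → Fin (P+1) → ℝ) :
    ∑ i, ∑ j, g i j = ∑ m : Fin (2*M+1), ∑ p ∈ Dg M P m, g p.1 p.2 := by
  have key : ∀ p : Fin (2*M+1-P) × Fin (P+1),
      ∑ m : Fin (2*M+1), (if P + p.1.val = m.val + p.2.val then g p.1 p.2 else 0)
        = g p.1 p.2 := by
    intro p
    have h1 := p.1.isLt; have h2 := p.2.isLt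
    have hkey : ∀ m : Fin (2*M+1), (P + p.1.val = m.val + p.2.val) ↔ m = dIdx M P p.1 p.2 := by
      intro m
      rw [Fin.ext_iff]
      simp only [dIdx]
      omega
    calc ∑ m : Fin (2*M+1), (if P + p.1.val = m.val + p.2.val then g p.1 p.2 else 0)
        = ∑ m : Fin (2*M+1), (if m = dIdx M P p.1 p.2 then g p.1 p.2 else 0) := by
          exact Finset.sum_congr rfl (fun m _ => by rw [if_congr (hkey m) rfl rfl])
      _ = g p.1 p.2 := by rw [Finset.sum_ite_eq' Finset.univ]; simp
  calc ∑ i, ∑ j, g i j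
      = ∑ p : Fin (2*M+1-P) × Fin (P+1), g p.1 p.2 := by rw [Fintype.sum_prod_type]
    _ = ∑ p : Fin (2*M+1-P) × Fin (P+1),
        ∑ m : Fin (2*M+1), (if P + p.1.val = m.val + p.2.val then g p.1 p.2 else 0) := by
          exact Finset.sum_congr rfl (fun p _ => (key p).symm)
    _ = ∑ m : Fin (2*M+1), ∑ p : Fin (2*M+1-P) × Fin (P+1),
        (if P + p.1.val = m.val + p.2.val then g p.1 p.2 else 0) := Finset.sum_comm
    _ = ∑ m : Fin (2*M+1), ∑ p ∈ Dg M P m, g p.1 p.2 := by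
          exact Finset.sum_congr rfl (fun m _ => by rw [Dg, Finset.sum_filter])

lemma master (M P : ℕ) (hP : P ≤ M)
    (X : Matrix (Fin (2*M+1-P)) (Fin (P+1)) ℂ) (w : Fin (2*M+1) → ℝ)
    (u : Fin (2*M+1) → ℂ) :
    ∑ i, ∑ j, (w (dIdx M P i j))^2 * ‖(X - Toep M P (ToepDag M P X)) i j‖^2
      ≤ ∑ i, ∑ j, (w (dIdx M P i j))^2 * ‖(X - Toep M P u) i j‖^2 := by
  rw [sum_diag, sum_diag]
  apply Finset.sum_le_sum
  intro m _
  have hd : ∀ p ∈ Dg M P m, dIdx M P p.1 p.2 = m := by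
    intro p hp
    simp only [Dg, Finset.mem_filter, Finset.mem_univ, true_and] at hp
    exact Fin.ext (by simp only [dIdx]; omega)
  have hToep : ∀ (v : Fin (2*M+1) → ℂ), ∀ p ∈ Dg M P m, Toep M P v p.1 p.2 = v m := by
    intro v p hp
    exact congrArg v (hd p hp)
  calc ∑ p ∈ Dg M P m, (w (dIdx M P p.1 p.2))^2 * ‖(X - Toep M P (ToepDag M P X)) p.1 p.2‖^2
      = (w m)^2 * ∑ p ∈ Dg M P m, ‖X p.1 p.2 - ToepDag M P X m‖^2 := by
        rw [Finset.mul_sum]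
        refine Finset.sum_congr rfl (fun p hp => ?_)
        rw [hd p hp, Matrix.sub_apply, hToep _ p hp]
    _ ≤ (w m)^2 * ∑ p ∈ Dg M P m, ‖X p.1 p.2 - u m‖^2 :=
        mul_le_mul_of_nonneg_left (mean_min _ _ _ _ (Dg_sum_zero M P hP X m)) (sq_nonneg _)
    _ = ∑ p ∈ Dg M P m, (w (dIdx M P p.1 p.2))^2 * ‖(X - Toep M P u) p.1 p.2‖^2 := by
        rw [Finset.mul_sum]
        refine Finset.sum_congr rfl (fun p hp => ?_)
        rw [hd p hp, Matrix.sub_apply, hToep _ p hp]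


/-- Proposition 2: the projection onto the Toeplitz subspace `𝕋_P` with
respect to the `W`-weighted Frobenius norm (`W = T_P(diag(Γ^{-1/2}))`) coincides with the
canonical (Frobenius) orthogonal projection `Π_{𝕋_P} = T_P Γ^{-1} T_P^*`: for every `X`,
the matrix `T_P Γ^{-1} T_P^* X` is Toeplitz and minimises both the `W`-weighted and the
canonical Frobenius distance from `X` over all Toeplitz matrices. -/
theorem weighted_toeplitz_projection (M P : ℕ) (hP : P ≤ M)
    (X : Matrix (Fin (2*M+1-P)) (Fin (P+1)) ℂ) :
    (∃ u : Fin (2*M+1) → ℂ, Toep M P (ToepDag M P X) = Toep M P u) ∧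
    (∀ Z : Matrix (Fin (2*M+1-P)) (Fin (P+1)) ℂ, (∃ u, Z = Toep M P u) →
      Real.sqrt (∑ i, ∑ j, (wgt M P i j * ‖(X - Toep M P (ToepDag M P X)) i j‖) ^ 2)
        ≤ Real.sqrt (∑ i, ∑ j, (wgt M P i j * ‖(X - Z) i j‖) ^ 2)) ∧
    (∀ Z : Matrix (Fin (2*M+1-P)) (Fin (P+1)) ℂ, (∃ u, Z = Toep M P u) →
      Real.sqrt (∑ i, ∑ j, ‖(X - Toep M P (ToepDag M P X)) i j‖ ^ 2)
        ≤ Real.sqrt (∑ i, ∑ j, ‖(X - Z) i j‖ ^ 2)) := by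

  refine ⟨⟨ToepDag M P X, rfl⟩, ?_, ?_⟩
  · rintro Z ⟨u, rfl⟩
    apply Real.sqrt_le_sqrt
    have hw : ∀ (A : Matrix (Fin (2*M+1-P)) (Fin (P+1)) ℂ) i j,
        (wgt M P i j * ‖A i j‖)^2
          = ((Real.sqrt (nCnt M P (dIdx M P i j)))⁻¹)^2 * ‖A i j‖^2 := by
      intro A i j
      rw [mul_pow]
      simp only [wgt, nCnt, dIdx]
    simp only [hw]
    exact master M P hP X (fun m => (Real.sqrt (nCnt M P m))⁻¹) u
  · rintro Z ⟨u, rfl⟩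
    apply Real.sqrt_le_sqrt
    have := master M P hP X (fun _ => 1) u
    simpa using this
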